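/- Lower bound on short-range interactions within a tube segment (Lemma 7.1): For any finite increasing sequence of reals −ℓλ ≤ x₁ < x₂ < ⋯ < x_n ≤ r, with occupation numbers n_k = #{i : x_i ∈ Y_k}, and any real numbers (v_{ij})_{1≤i<j≤n} satisfying v_{ij} ≥ −g(x_j − x_i), one has Σ_{1≤i<j≤n} v_{ij} ≥ −C · Σ_{k=−ℓ}^{R} n_k², where C = (5/2)·g(0) + 2·Σ_{D=1}^∞ g(Dλ). In particular, under the standing assumptions on V₂ this applies to v_{ij} = V₂(y_i, y_j; x_j − x_i). -/

import Mathlib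

open Real

open Finset in
lemma sum_G_row_le (lam : ℝ) (hlam : 0 < lam) (g : ℝ → ℝ)
    (hg_nonneg : ∀ x : ℝ, 0 ≤ x → 0 ≤ g x)
    (hg_sum : Summable fun D : ℕ => g (((D : ℝ) + 1) * lam))
    (s : Finset ℤ) (e : ℤ → ℤ) (he : Function.Injective e) :
    ∑ b ∈ s, (if 0 ≤ e b then g (((((e b) - 1) ⊔ 0 : ℤ) : ℝ) * lam) else 0)
      ≤ 2 * g 0 + ∑' D : ℕ, g (((D : ℝ) + 1) * lam) := by
  set F : ℕ → ℝ := fun m => g (((m - 1 : ℕ) : ℝ) * lam) with hF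
  have hF_nonneg : ∀ m, 0 ≤ F m := fun m => hg_nonneg _ (by positivity)
  have hshift : (fun m : ℕ => F (m + 2)) = fun m : ℕ => g (((m : ℝ) + 1) * lam) := by
    funext m
    simp only [hF]
    norm_num
  have hF_sum : Summable F := (summable_nat_add_iff 2).mp (by rw [hshift]; exact hg_sum)
  have htsum : ∑' m, F m = 2 * g 0 + ∑' D : ℕ, g (((D : ℝ) + 1) * lam) := by
    rw [← Summable.sum_add_tsum_nat_add 2 hF_sum]
    congr 1
    · simp [hF, Finset.sum_range_succ]
      ring
    · exact tsum_congr fun m => by simp only [hF]; norm_num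
  rw [← Finset.sum_filter]
  set t := s.filter (fun b => 0 ≤ e b) with ht
  have hstep : ∀ b ∈ t, g (((((e b) - 1) ⊔ 0 : ℤ) : ℝ) * lam) = F ((e b).toNat) := by
    intro b hb
    rw [ht, Finset.mem_filter] at hb
    have h1 : (((e b) - 1) ⊔ 0 : ℤ) = (((e b).toNat - 1 : ℕ) : ℤ) := by omega
    simp only [hF]
    congr 2
    exact_mod_cast congrArg (Int.cast : ℤ → ℝ) h1
  rw [Finset.sum_congr rfl hstep]
  have hinj : ∀ b1 ∈ t, ∀ b2 ∈ t, (e b1).toNat = (e b2).toNat → b1 = b2 := by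
    intro b1 h1 b2 h2 h
    rw [ht, Finset.mem_filter] at h1 h2
    exact he (by omega)
  rw [← Finset.sum_image hinj]
  calc ∑ m ∈ t.image (fun b => (e b).toNat), F m ≤ ∑' m, F m :=
        Summable.sum_le_tsum _ (fun m _ => hF_nonneg m) hF_sum
    _ = _ := htsum


/-- Lower bound on short-range interactions within a tube segment (Lemma 7.1):
for particles `-ℓλ ≤ x₁ < ⋯ < x_n ≤ r` with occupation numbers `n_k` of the cells
`Y_k = [kλ,(k+1)λ)` (`k = -ℓ,…,R-1`) and `Y_R = [Rλ,r]`, and any `v_{ij} ≥ -g(x_j - x_i)`,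
one has `Σ_{i<j} v_{ij} ≥ -C Σ_{k=-ℓ}^{R} n_k²` with
`C = (5/2) g(0) + 2 Σ_{D=1}^∞ g(Dλ)`. -/
theorem interaction_lower_bound (lam : ℝ) (hlam : 0 < lam) (g : ℝ → ℝ)
    (hg_nonneg : ∀ x : ℝ, 0 ≤ x → 0 ≤ g x)
    (hg_dec : ∀ ⦃x y : ℝ⦄, 0 ≤ x → x ≤ y → g y ≤ g x)
    (hg_sum : Summable fun D : ℕ => g (((D : ℝ) + 1) * lam))
    (ℓ : ℕ) (r : ℝ) (hr : 0 < r)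
    (n : ℕ) (x : Fin n → ℝ) (hx : StrictMono x)
    (hxlb : ∀ i, -(ℓ : ℝ) * lam ≤ x i) (hxub : ∀ i, x i ≤ r)
    (v : Fin n → Fin n → ℝ) (hv : ∀ i j : Fin n, i < j → -g (x j - x i) ≤ v i j)
    (nk : ℤ → ℕ)
    (hnk : ∀ k : ℤ, k < ⌊r / lam⌋ →
      nk k = Nat.card {i : Fin n // x i ∈ Set.Ico ((k : ℝ) * lam) (((k : ℝ) + 1) * lam)})
    (hnkR : nk ⌊r / lam⌋ =
      Nat.card {i : Fin n // x i ∈ Set.Icc ((⌊r / lam⌋ : ℝ) * lam) r}) :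
    -(((5 / 2) * g 0 + 2 * ∑' D : ℕ, g (((D : ℝ) + 1) * lam)) *
        ∑ k ∈ Finset.Icc (-(ℓ : ℤ)) ⌊r / lam⌋, (nk k : ℝ) ^ 2) ≤
      ∑ i : Fin n, ∑ j : Fin n, if i < j then v i j else 0 := by
  classical
  set R : ℤ := ⌊r / lam⌋ with hRdef
  set T : ℝ := ∑' D : ℕ, g (((D : ℝ) + 1) * lam) with hTdef
  have hT0 : 0 ≤ T := tsum_nonneg fun D => hg_nonneg _ (by positivity)
  have hg0 : 0 ≤ g 0 := hg_nonneg 0 le_rfl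
  have hR0 : (0 : ℤ) ≤ R := Int.floor_nonneg.2 (by positivity)
  set K : Finset ℤ := Finset.Icc (-(ℓ : ℤ)) R with hKdef
  set c : Fin n → ℤ := fun i => min ⌊x i / lam⌋ R with hcdef
  have hfloor_lb : ∀ i, -(ℓ : ℤ) ≤ ⌊x i / lam⌋ := by
    intro i
    apply Int.le_floor.2
    rw [le_div_iff₀ hlam]
    push_cast
    linarith [hxlb i]
  have hcmem : ∀ i, c i ∈ K := by
    intro i
    rw [hKdef, Finset.mem_Icc]
    have h := hfloor_lb i
    constructor
    · show -(ℓ : ℤ) ≤ min ⌊x i / lam⌋ R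
      omega
    · exact min_le_right _ _
  have hcmono : ∀ i j : Fin n, i < j → c i ≤ c j := by
    intro i j hij
    have h1 : x i ≤ x j := (hx hij).le
    have h2 : x i / lam ≤ x j / lam := by gcongr
    exact min_le_min (Int.floor_le_floor h2) le_rfl
  have hcard : ∀ k ∈ K, nk k = (Finset.univ.filter (fun i => c i = k)).card := by
    intro k hk
    rw [hKdef, Finset.mem_Icc] at hk
    rcases lt_or_eq_of_le hk.2 with hkR | hkR
    · rw [hnk k hkR]
      rw [Nat.card_eq_fintype_card, Fintype.card_subtype]
      congr 1
      apply Finset.filter_congr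
      intro i _
      simp only [Set.mem_Ico, eq_iff_iff]
      constructor
      · rintro ⟨h1, h2⟩
        have hfl : ⌊x i / lam⌋ = k := Int.floor_eq_iff.2 ⟨by rw [le_div_iff₀ hlam]; exact h1,
          by rw [div_lt_iff₀ hlam]; linarith⟩
        show min ⌊x i / lam⌋ R = k
        omega
      · intro h
        replace h : min ⌊x i / lam⌋ R = k := h
        have hfl : ⌊x i / lam⌋ = k := by omega
        have h1 := Int.floor_le (x i / lam)
        have h2 := Int.lt_floor_add_one (x i / lam)
        rw [hfl] at h1 h2
        constructor
        · calc (k : ℝ) * lam ≤ (x i / lam) * lam := by gcongr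
            _ = x i := by field_simp
        · calc x i = (x i / lam) * lam := by field_simp
            _ < ((k : ℝ) + 1) * lam := by gcongr
    · rw [hkR, hnkR]
      rw [Nat.card_eq_fintype_card, Fintype.card_subtype]
      congr 1
      apply Finset.filter_congr
      intro i _
      simp only [Set.mem_Icc, eq_iff_iff]
      constructor
      · rintro ⟨h1, _⟩
        have hfl : R ≤ ⌊x i / lam⌋ := Int.le_floor.2 (by rw [le_div_iff₀ hlam]; exact h1)
        show min ⌊x i / lam⌋ R = R
        omega
      · intro h
        replace h : min ⌊x i / lam⌋ R = R := h
        have hfl : R ≤ ⌊x i / lam⌋ := by omega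
        have h1 : (R : ℝ) ≤ x i / lam := le_trans (by exact_mod_cast hfl) (Int.floor_le _)
        refine ⟨?_, hxub i⟩
        calc (R : ℝ) * lam ≤ (x i / lam) * lam := by gcongr
          _ = x i := by field_simp
  set G : ℤ → ℝ := fun d => g ((((d - 1) ⊔ 0 : ℤ) : ℝ) * lam) with hGdef
  have hG0 : ∀ d, 0 ≤ G d := by
    intro d
    apply hg_nonneg
    apply mul_nonneg _ hlam.le
    exact_mod_cast le_max_right (d - 1) 0
  have hpair : ∀ i j : Fin n, i < j → g (x j - x i) ≤ G (c j - c i) := by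
    intro i j hij
    have hxij : 0 ≤ x j - x i := by linarith [hx hij]
    rcases le_or_gt (c j - c i) 1 with hd | hd
    · have hsup : (c j - c i - 1) ⊔ 0 = 0 := by omega
      calc g (x j - x i) ≤ g 0 := hg_dec le_rfl hxij
        _ = G (c j - c i) := by simp only [hGdef]; rw [hsup]; norm_num
    · have hcjR : c j ≤ R := min_le_right _ _
      have hciR : min ⌊x i / lam⌋ R < R := show c i < R by omega
      have hci : c i = ⌊x i / lam⌋ := show min ⌊x i / lam⌋ R = ⌊x i / lam⌋ by omega
      have hxi : x i < ((c i : ℝ) + 1) * lam := by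
        have h2 := Int.lt_floor_add_one (x i / lam)
        rw [← hci] at h2
        calc x i = (x i / lam) * lam := by field_simp
          _ < ((c i : ℝ) + 1) * lam := by gcongr
      have hxj : (c j : ℝ) * lam ≤ x j := by
        have h1 : (c j : ℝ) ≤ x j / lam := by
          refine le_trans ?_ (Int.floor_le _)
          exact_mod_cast min_le_left ⌊x j / lam⌋ R
        calc (c j : ℝ) * lam ≤ (x j / lam) * lam := by gcongr
          _ = x j := by field_simp
      have hsup : (c j - c i - 1) ⊔ 0 = c j - c i - 1 := by omega
      have harg : (0 : ℝ) ≤ ((c j - c i - 1 : ℤ) : ℝ) * lam := by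
        apply mul_nonneg _ hlam.le
        exact_mod_cast (by omega : (0 : ℤ) ≤ c j - c i - 1)
      have hle : ((c j - c i - 1 : ℤ) : ℝ) * lam ≤ x j - x i := by
        push_cast
        nlinarith
      calc g (x j - x i) ≤ g (((c j - c i - 1 : ℤ) : ℝ) * lam) := hg_dec harg hle
        _ = G (c j - c i) := by simp only [hGdef]; rw [hsup]
  set H : ℤ → ℤ → ℝ := fun a b => if a ≤ b then G (b - a) else 0 with hHdef
  have hH0 : ∀ a b, 0 ≤ H a b := by
    intro a b
    simp only [hHdef]
    split
    · exact hG0 _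
    · exact le_rfl
  have hrow : ∀ a : ℤ, ∑ b ∈ K, H a b ≤ 2 * g 0 + T := by
    intro a
    refine le_trans (le_of_eq ?_) (sum_G_row_le lam hlam g hg_nonneg hg_sum K (fun b => b - a)
      (fun b1 b2 h => by dsimp only at h; omega))
    refine Finset.sum_congr rfl fun b _ => ?_
    simp only [hHdef, hGdef]
    by_cases hab : a ≤ b
    · rw [if_pos hab, if_pos (show (0 : ℤ) ≤ b - a by omega)]
    · rw [if_neg hab, if_neg (show ¬ (0 : ℤ) ≤ b - a by omega)]
  have hcol : ∀ b : ℤ, ∑ a ∈ K, H a b ≤ 2 * g 0 + T := by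
    intro b
    refine le_trans (le_of_eq ?_) (sum_G_row_le lam hlam g hg_nonneg hg_sum K (fun a => b - a)
      (fun a1 a2 h => by dsimp only at h; omega))
    refine Finset.sum_congr rfl fun a _ => ?_
    simp only [hHdef, hGdef]
    by_cases hab : a ≤ b
    · rw [if_pos hab, if_pos (show (0 : ℤ) ≤ b - a by omega)]
    · rw [if_neg hab, if_neg (show ¬ (0 : ℤ) ≤ b - a by omega)]
  set S : ℝ := ∑ k ∈ K, (nk k : ℝ) ^ 2 with hSdef
  have hS0 : 0 ≤ S := Finset.sum_nonneg fun k _ => sq_nonneg _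
  have key : ∑ i : Fin n, ∑ j : Fin n, (if i < j then g (x j - x i) else 0)
      ≤ ((5 / 2) * g 0 + 2 * T) * S := by
    have step1 : ∑ i : Fin n, ∑ j : Fin n, (if i < j then g (x j - x i) else 0)
        ≤ ∑ i : Fin n, ∑ j : Fin n, (if i < j then G (c j - c i) else 0) := by
      refine Finset.sum_le_sum fun i _ => Finset.sum_le_sum fun j _ => ?_
      split
      · exact hpair i j ‹_›
      · exact le_rfl
    have step2 : ∑ i : Fin n, ∑ j : Fin n, (if i < j then G (c j - c i) else 0)
        = ∑ a ∈ K, ∑ b ∈ K, ∑ i ∈ Finset.univ.filter (fun i => c i = a),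
            ∑ j ∈ Finset.univ.filter (fun j => c j = b), (if i < j then G (c j - c i) else 0) := by
      rw [← Finset.sum_fiberwise_of_maps_to (fun i (_ : i ∈ Finset.univ) => hcmem i)
        (fun i => ∑ j : Fin n, (if i < j then G (c j - c i) else 0))]
      refine Finset.sum_congr rfl fun a _ => ?_
      calc ∑ i ∈ Finset.univ.filter (fun i => c i = a), ∑ j : Fin n, (if i < j then G (c j - c i) else 0)
          = ∑ i ∈ Finset.univ.filter (fun i => c i = a), ∑ b ∈ K,
              ∑ j ∈ Finset.univ.filter (fun j => c j = b), (if i < j then G (c j - c i) else 0) :=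
            Finset.sum_congr rfl fun i _ =>
              (Finset.sum_fiberwise_of_maps_to (fun j (_ : j ∈ Finset.univ) => hcmem j) _).symm
        _ = _ := Finset.sum_comm
    have step3 : ∀ a ∈ K, ∀ b ∈ K,
        ∑ i ∈ Finset.univ.filter (fun i => c i = a), ∑ j ∈ Finset.univ.filter (fun j => c j = b),
          (if i < j then G (c j - c i) else 0) ≤ (nk a : ℝ) * (nk b : ℝ) * H a b := by
      intro a ha b hb
      have hpt : ∀ i ∈ Finset.univ.filter (fun i => c i = a), ∀ j ∈ Finset.univ.filter (fun j => c j = b),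
          (if i < j then G (c j - c i) else 0) ≤ H a b := by
        intro i hi j hj
        rw [Finset.mem_filter] at hi hj
        split
        · have hab : a ≤ b := by rw [← hi.2, ← hj.2]; exact hcmono i j ‹_›
          rw [hi.2, hj.2]
          simp only [hHdef]
          rw [if_pos hab]
        · exact hH0 a b
      calc ∑ i ∈ Finset.univ.filter (fun i => c i = a), ∑ j ∈ Finset.univ.filter (fun j => c j = b),
            (if i < j then G (c j - c i) else 0)
          ≤ ∑ _i ∈ Finset.univ.filter (fun i => c i = a), ∑ _j ∈ Finset.univ.filter (fun j => c j = b),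
            H a b := Finset.sum_le_sum fun i hi => Finset.sum_le_sum fun j hj => hpt i hi j hj
        _ = (nk a : ℝ) * (nk b : ℝ) * H a b := by
            rw [Finset.sum_const, Finset.sum_const, ← hcard a ha, ← hcard b hb]
            push_cast [nsmul_eq_mul]
            ring
    have e1 : ∑ a ∈ K, ∑ b ∈ K, (nk a : ℝ) ^ 2 * H a b ≤ (2 * g 0 + T) * S := by
      calc ∑ a ∈ K, ∑ b ∈ K, (nk a : ℝ) ^ 2 * H a b
          = ∑ a ∈ K, (nk a : ℝ) ^ 2 * ∑ b ∈ K, H a b :=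
            Finset.sum_congr rfl fun a _ => (Finset.mul_sum _ _ _).symm
        _ ≤ ∑ a ∈ K, (nk a : ℝ) ^ 2 * (2 * g 0 + T) :=
            Finset.sum_le_sum fun a _ => mul_le_mul_of_nonneg_left (hrow a) (sq_nonneg _)
        _ = (2 * g 0 + T) * S := by rw [← Finset.sum_mul, hSdef]; exact mul_comm _ _
    have e2 : ∑ a ∈ K, ∑ b ∈ K, (nk b : ℝ) ^ 2 * H a b ≤ (2 * g 0 + T) * S := by
      rw [Finset.sum_comm]
      calc ∑ b ∈ K, ∑ a ∈ K, (nk b : ℝ) ^ 2 * H a b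
          = ∑ b ∈ K, (nk b : ℝ) ^ 2 * ∑ a ∈ K, H a b :=
            Finset.sum_congr rfl fun b _ => (Finset.mul_sum _ _ _).symm
        _ ≤ ∑ b ∈ K, (nk b : ℝ) ^ 2 * (2 * g 0 + T) :=
            Finset.sum_le_sum fun b _ => mul_le_mul_of_nonneg_left (hcol b) (sq_nonneg _)
        _ = (2 * g 0 + T) * S := by rw [← Finset.sum_mul, hSdef]; exact mul_comm _ _
    have h2 : ∑ a ∈ K, ∑ b ∈ K, (2 * ((nk a : ℝ) * (nk b : ℝ) * H a b))
        ≤ (∑ a ∈ K, ∑ b ∈ K, (nk a : ℝ) ^ 2 * H a b)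
          + ∑ a ∈ K, ∑ b ∈ K, (nk b : ℝ) ^ 2 * H a b := by
      rw [← Finset.sum_add_distrib]
      refine Finset.sum_le_sum fun a _ => ?_
      rw [← Finset.sum_add_distrib]
      refine Finset.sum_le_sum fun b _ => ?_
      nlinarith [hH0 a b, sq_nonneg ((nk a : ℝ) - (nk b : ℝ))]
    have h3 : ∑ a ∈ K, ∑ b ∈ K, (2 * ((nk a : ℝ) * (nk b : ℝ) * H a b))
        = 2 * ∑ a ∈ K, ∑ b ∈ K, (nk a : ℝ) * (nk b : ℝ) * H a b := by
      rw [Finset.mul_sum]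
      exact Finset.sum_congr rfl fun a _ => (Finset.mul_sum _ _ _).symm
    have step4 : ∑ a ∈ K, ∑ b ∈ K, (nk a : ℝ) * (nk b : ℝ) * H a b ≤ (2 * g 0 + T) * S := by
      rw [h3] at h2
      linarith
    calc ∑ i : Fin n, ∑ j : Fin n, (if i < j then g (x j - x i) else 0)
        ≤ ∑ i : Fin n, ∑ j : Fin n, (if i < j then G (c j - c i) else 0) := step1
      _ = ∑ a ∈ K, ∑ b ∈ K, ∑ i ∈ Finset.univ.filter (fun i => c i = a),
            ∑ j ∈ Finset.univ.filter (fun j => c j = b), (if i < j then G (c j - c i) else 0) := step2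
      _ ≤ ∑ a ∈ K, ∑ b ∈ K, (nk a : ℝ) * (nk b : ℝ) * H a b :=
          Finset.sum_le_sum fun a ha => Finset.sum_le_sum fun b hb => step3 a ha b hb
      _ ≤ (2 * g 0 + T) * S := step4
      _ ≤ ((5 / 2) * g 0 + 2 * T) * S := by nlinarith
  have lower : ∀ i : Fin n, ∀ j : Fin n,
      -(if i < j then g (x j - x i) else 0) ≤ (if i < j then v i j else 0) := by
    intro i j
    split
    · exact hv i j ‹_›
    · simp
  calc -(((5 / 2) * g 0 + 2 * T) * S)
      ≤ -(∑ i : Fin n, ∑ j : Fin n, (if i < j then g (x j - x i) else 0)) := neg_le_neg key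
    _ = ∑ i : Fin n, ∑ j : Fin n, -(if i < j then g (x j - x i) else 0) := by
        rw [← Finset.sum_neg_distrib]
        exact Finset.sum_congr rfl fun i _ => (Finset.sum_neg_distrib _).symm
    _ ≤ ∑ i : Fin n, ∑ j : Fin n, (if i < j then v i j else 0) :=
        Finset.sum_le_sum fun i _ => Finset.sum_le_sum fun j _ => lower i j
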